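/- Up to permuting rows and multiplying rows by −1, the only integer matrix Q ∈ ℤ^{(n+d)×n} with all rows nonzero satisfying Qᵀ·Q = (d + δ_ij)_{i,j=1}^n is the matrix whose first n rows are the standard basis vectors e₁, …, e_n and whose last d rows all equal (−1, −1, …, −1). -/

import Mathlib

open Matrix Finset

lemma sum_sq_sub {m n : ℕ} (d : ℕ) (R : Fin m → Fin n → ℤ)
    (hgram : ∀ i j, ∑ k, R k i * R k j = d + if i = j then 1 else 0)
    {i j : Fin n} (hij : i ≠ j) :
    ∑ k, (R k i - R k j)^2 = 2 := by
  rw [Finset.sum_congr rfl (fun k _ => show (R k i - R k j)^2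
      = R k i * R k i - 2 * (R k i * R k j) + R k j * R k j by ring),
    Finset.sum_add_distrib, Finset.sum_sub_distrib, ← Finset.mul_sum,
    hgram i i, hgram i j, hgram j j, if_pos rfl, if_pos rfl, if_neg hij]
  ring

lemma diff_bound {m n : ℕ} (d : ℕ) (R : Fin m → Fin n → ℤ)
    (hgram : ∀ i j, ∑ k, R k i * R k j = d + if i = j then 1 else 0) :
    ∀ k i j, R k i ≤ R k j + 1 := by
  intro k i j
  rcases eq_or_ne i j with rfl | hij
  · omega
  · have h2 := sum_sq_sub d R hgram hij
    have hle : (R k i - R k j)^2 ≤ 2 := by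
      rw [← h2]
      exact Finset.single_le_sum (f := fun l => (R l i - R l j)^2) (fun l _ => sq_nonneg _) (Finset.mem_univ k)
    nlinarith [sq_nonneg (R k i - R k j - 1), sq_nonneg (R k i - R k j + 1)]

lemma sum_self_sub {m n : ℕ} (d : ℕ) (R : Fin m → Fin n → ℤ)
    (hgram : ∀ i j, ∑ k, R k i * R k j = d + if i = j then 1 else 0)
    {i j : Fin n} (hij : i ≠ j) :
    ∑ k, R k i * (R k i - R k j) = 1 := by
  rw [Finset.sum_congr rfl (fun k _ => show R k i * (R k i - R k j)
      = R k i * R k i - R k i * R k j by ring),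
    Finset.sum_sub_distrib, hgram i i, hgram i j, if_pos rfl, if_neg hij]
  ring

lemma key (d n : ℕ) (hn : 2 ≤ n) (P : Fin (n + d) → Fin n → ℤ)
    (hpos : ∀ k i, 0 ≤ P k i)
    (hrows : ∀ k, ∃ i, P k i ≠ 0)
    (hgram : ∀ i j, ∑ k, P k i * P k j = (d : ℤ) + if i = j then 1 else 0) :
    ∃ σ : Equiv.Perm (Fin (n + d)), ∀ i j, P (σ i) j =
      if (i : ℕ) = (j : ℕ) then 1 else if n ≤ (i : ℕ) then 1 else 0 := by
  classical
  have hdiff := diff_bound d P hgram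
  -- exactly one row with i high, j low, for each pair i ≠ j
  have hcard1 : ∀ i j : Fin n, i ≠ j →
      (Finset.univ.filter fun k => P k j < P k i).card = 1 := by
    have hne : ∀ a b : Fin n, a ≠ b →
        (Finset.univ.filter fun k => P k b < P k a).card ≠ 0 := by
      intro a b hab h0
      have hall : ∀ k, ¬ (P k b < P k a) := by
        intro k hk
        have : k ∈ Finset.univ.filter fun k => P k b < P k a := by
          simp [hk]
        rw [Finset.card_eq_zero] at h0
        simp [h0] at this
      have hs := sum_self_sub d P hgram hab
      have hle : ∑ k, P k a * (P k a - P k b) ≤ 0 :=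
        Finset.sum_nonpos fun k _ => by nlinarith [hpos k a, not_lt.mp (hall k)]
      omega
    intro i j hij
    have hsq := sum_sq_sub d P hgram hij
    have hpt : ∀ k, (P k i - P k j)^2 =
        (if P k j < P k i then (1:ℤ) else 0) + (if P k i < P k j then 1 else 0) := by
      intro k
      have h1 := hdiff k i j
      have h2 := hdiff k j i
      rcases lt_trichotomy (P k i) (P k j) with h | h | h
      · have hv : P k i - P k j = -1 := by omega
        rw [hv, if_neg (by omega), if_pos h]; norm_num
      · rw [h]; simp
      · have hv : P k i - P k j = 1 := by omega
        rw [hv, if_pos h, if_neg (by omega)]; norm_num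
    have h2' : ((Finset.univ.filter fun k => P k j < P k i).card : ℤ) +
        ((Finset.univ.filter fun k => P k i < P k j).card : ℤ) = 2 := by
      rw [← Finset.sum_boole, ← Finset.sum_boole, ← Finset.sum_add_distrib,
        ← Finset.sum_congr rfl fun k _ => hpt k, hsq]
    have ha := hne i j hij
    have hb := hne j i hij.symm
    omega
  set B : Finset (Fin (n + d)) := Finset.univ.filter (fun k => ∀ i, 1 ≤ P k i) with hBdef
  set S : Finset (Fin (n + d)) := Finset.univ.filter (fun k => ¬ ∀ i, 1 ≤ P k i) with hSdef
  have hSmem : ∀ k ∈ S, ∃ i, P k i = 0 := by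
    intro k hk
    rw [hSdef, Finset.mem_filter] at hk
    push_neg at hk
    obtain ⟨i, hi⟩ := hk.2
    exact ⟨i, by have := hpos k i; omega⟩
  have hsmall01 : ∀ k ∈ S, ∀ i, P k i = 0 ∨ P k i = 1 := by
    intro k hk i
    obtain ⟨i0, hi0⟩ := hSmem k hk
    have h1 := hdiff k i i0
    have h2 := hpos k i
    omega
  have hij01 : (⟨0, by omega⟩ : Fin n) ≠ ⟨1, by omega⟩ := by simp [Fin.ext_iff]
  -- B.card ≤ d
  have hBcard : (B.card : ℤ) ≤ d := by
    have hg := hgram ⟨0, by omega⟩ ⟨1, by omega⟩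
    rw [if_neg hij01, add_zero,
      ← Finset.sum_filter_add_sum_filter_not Finset.univ (fun k => ∀ i, 1 ≤ P k i)] at hg
    have h1 := Finset.card_nsmul_le_sum B
      (fun k => P k ⟨0, by omega⟩ * P k ⟨1, by omega⟩) 1 (by
        intro k hk
        rw [hBdef, Finset.mem_filter] at hk
        have ha := hk.2 (⟨0, by omega⟩ : Fin n)
        have hb := hk.2 (⟨1, by omega⟩ : Fin n)
        show (1:ℤ) ≤ P k ⟨0, by omega⟩ * P k ⟨1, by omega⟩
        nlinarith)
    have h2 : (0:ℤ) ≤ ∑ k ∈ S, P k ⟨0, by omega⟩ * P k ⟨1, by omega⟩ :=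
      Finset.sum_nonneg fun k _ => mul_nonneg (hpos _ _) (hpos _ _)
    simp only [nsmul_eq_mul, mul_one] at h1
    rw [← hBdef, ← hSdef] at hg
    push_cast at h1 ⊢
    linarith
  -- S.card ≤ n by double counting
  have hW : ∀ k ∈ S, (n:ℤ) - 1 ≤ ∑ i, ∑ j, (if P k j < P k i then (1:ℤ) else 0) := by
    intro k hk
    have h01 := hsmall01 k hk
    have hpt : ∀ i j : Fin n, (if P k j < P k i then (1:ℤ) else 0) =
        (if P k i = 1 then (1:ℤ) else 0) * (if P k j = 0 then 1 else 0) := by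
      intro i j
      rcases h01 i with h | h <;> rcases h01 j with h' | h' <;> simp [h, h']
    have hprod : ∑ i, ∑ j, (if P k j < P k i then (1:ℤ) else 0) =
        (∑ i, if P k i = 1 then (1:ℤ) else 0) * (∑ j, if P k j = 0 then (1:ℤ) else 0) := by
      rw [Finset.sum_mul_sum]
      exact Finset.sum_congr rfl fun i _ => Finset.sum_congr rfl fun j _ => hpt i j
    set p : ℤ := ∑ i, if P k i = 1 then (1:ℤ) else 0 with hp
    set q : ℤ := ∑ j, if P k j = 0 then (1:ℤ) else 0 with hq
    have hpq : p + q = n := by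
      rw [hp, hq, ← Finset.sum_add_distrib]
      rw [Finset.sum_congr rfl (fun i _ => show
        ((if P k i = 1 then (1:ℤ) else 0) + if P k i = 0 then (1:ℤ) else 0) = 1 by
          rcases h01 i with h | h <;> simp [h])]
      simp
    have hp1 : 1 ≤ p := by
      obtain ⟨i1, hi1⟩ := hrows k
      have : P k i1 = 1 := by rcases h01 i1 with h | h; exact absurd h hi1; exact h
      calc (1:ℤ) = if P k i1 = 1 then (1:ℤ) else 0 := by rw [if_pos this]
      _ ≤ p := Finset.single_le_sum (f := fun i => if P k i = 1 then (1:ℤ) else 0)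
          (fun i _ => by positivity) (Finset.mem_univ i1)
    have hq1 : 1 ≤ q := by
      obtain ⟨i0, hi0⟩ := hSmem k hk
      calc (1:ℤ) = if P k i0 = 0 then (1:ℤ) else 0 := by rw [if_pos hi0]
      _ ≤ q := Finset.single_le_sum (f := fun i => if P k i = 0 then (1:ℤ) else 0)
          (fun i _ => by positivity) (Finset.mem_univ i0)
    rw [hprod]
    nlinarith [mul_nonneg (sub_nonneg.mpr hp1) (sub_nonneg.mpr hq1)]
  have hT1 : ∑ k, ∑ i, ∑ j, (if P k j < P k i then (1:ℤ) else 0) = n * n - n := by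
    have e1 : ∑ k, ∑ i, ∑ j, (if P k j < P k i then (1:ℤ) else 0)
        = ∑ i, ∑ j, ∑ k, (if P k j < P k i then (1:ℤ) else 0) := by
      rw [Finset.sum_comm]
      exact Finset.sum_congr rfl fun i _ => Finset.sum_comm
    rw [e1]
    have e2 : ∀ i j : Fin n, ∑ k, (if P k j < P k i then (1:ℤ) else 0)
        = if i = j then 0 else 1 := by
      intro i j
      rw [Finset.sum_boole]
      rcases eq_or_ne i j with rfl | hij
      · simp
      · rw [if_neg hij, hcard1 i j hij]; norm_num
    rw [Finset.sum_congr rfl fun i _ => Finset.sum_congr rfl fun j _ => e2 i j]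
    rw [Finset.sum_congr rfl (fun i (_ : i ∈ Finset.univ) => show
        (∑ j, if i = j then (0:ℤ) else 1) = n - 1 by
      rw [Finset.sum_congr rfl (fun j _ => show (if i = j then (0:ℤ) else 1)
          = 1 - if i = j then 1 else 0 by split <;> ring),
        Finset.sum_sub_distrib, Finset.sum_ite_eq]
      simp)]
    simp [Finset.sum_const]
  have hScard : (S.card : ℤ) ≤ n := by
    have hsplit : ∑ k, ∑ i, ∑ j, (if P k j < P k i then (1:ℤ) else 0)
        = ∑ k ∈ B, (∑ i, ∑ j, if P k j < P k i then (1:ℤ) else 0)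
        + ∑ k ∈ S, (∑ i, ∑ j, if P k j < P k i then (1:ℤ) else 0) := by
      rw [← Finset.sum_filter_add_sum_filter_not Finset.univ (fun k => ∀ i, 1 ≤ P k i)]
    have h1 : (0:ℤ) ≤ ∑ k ∈ B, (∑ i, ∑ j, if P k j < P k i then (1:ℤ) else 0) :=
      Finset.sum_nonneg fun k _ => Finset.sum_nonneg fun i _ =>
        Finset.sum_nonneg fun j _ => by positivity
    have h2 := Finset.card_nsmul_le_sum S
      (fun k => ∑ i, ∑ j, if P k j < P k i then (1:ℤ) else 0) ((n:ℤ) - 1) hW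
    simp only [nsmul_eq_mul] at h2
    push_cast at h2
    have hn1 : (0:ℤ) < (n:ℤ) - 1 := by
      have : (2:ℤ) ≤ n := by exact_mod_cast hn
      linarith
    have : (S.card : ℤ) * ((n:ℤ) - 1) ≤ (n:ℤ) * ((n:ℤ) - 1) := by
      rw [hT1] at hsplit
      nlinarith
    exact le_of_mul_le_mul_right this hn1
  have hcards : B.card + S.card = n + d := by
    have := Finset.card_filter_add_card_filter_not
      (s := (Finset.univ : Finset (Fin (n+d)))) (p := fun k => ∀ i, 1 ≤ P k i)
    rw [← hBdef, ← hSdef] at this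
    simpa using this
  have hBd : B.card = d := by omega
  have hSn : S.card = n := by omega
  -- equality analysis for each pair
  have hpair : ∀ i j : Fin n, i ≠ j →
      (∀ k ∈ B, P k i * P k j = 1) ∧ (∀ k ∈ S, P k i * P k j = 0) := by
    intro i j hij
    have hg := hgram i j
    rw [if_neg hij, add_zero,
      ← Finset.sum_filter_add_sum_filter_not Finset.univ (fun k => ∀ i, 1 ≤ P k i)] at hg
    rw [← hBdef, ← hSdef] at hg
    have hBterm : ∀ k ∈ B, (1:ℤ) ≤ P k i * P k j := by
      intro k hk
      rw [hBdef, Finset.mem_filter] at hk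
      have ha := hk.2 i
      have hb := hk.2 j
      nlinarith
    have h1 := Finset.card_nsmul_le_sum B (fun k => P k i * P k j) 1 hBterm
    simp only [nsmul_eq_mul, mul_one, hBd] at h1
    have h2 : (0:ℤ) ≤ ∑ k ∈ S, P k i * P k j :=
      Finset.sum_nonneg fun k _ => mul_nonneg (hpos _ _) (hpos _ _)
    have hSsum : ∑ k ∈ S, P k i * P k j = 0 := by linarith
    have hBsum : ∑ k ∈ B, P k i * P k j = d := by linarith
    constructor
    · intro k hk
      have hz : ∑ k ∈ B, (P k i * P k j - 1) = 0 := by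
        rw [Finset.sum_sub_distrib, hBsum]
        simp [hBd]
      have := (Finset.sum_eq_zero_iff_of_nonneg
        (fun k hk => by have := hBterm k hk; linarith)).mp hz k hk
      linarith
    · intro k hk
      exact (Finset.sum_eq_zero_iff_of_nonneg
        (fun k _ => mul_nonneg (hpos _ _) (hpos _ _))).mp hSsum k hk
  -- big rows are all-ones
  have hBone : ∀ k ∈ B, ∀ i, P k i = 1 := by
    intro k hk i
    have : Nontrivial (Fin n) := Fin.nontrivial_iff_two_le.mpr hn
    obtain ⟨j, hj⟩ := exists_ne i
    have h1 := (hpair i j (Ne.symm hj)).1 k hk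
    rw [hBdef, Finset.mem_filter] at hk
    have ha := hk.2 i
    have hb := hk.2 j
    have : P k i ≤ 1 := by nlinarith
    omega
  -- small rows are unit vectors
  have hSrow : ∀ k ∈ S, ∃ i, ∀ j, P k j = if j = i then 1 else 0 := by
    intro k hk
    obtain ⟨i1, hi1⟩ := hrows k
    have h1 : P k i1 = 1 := by
      rcases hsmall01 k hk i1 with h | h
      · exact absurd h hi1
      · exact h
    refine ⟨i1, fun j => ?_⟩
    rcases eq_or_ne j i1 with rfl | hj
    · rw [if_pos rfl]; exact h1
    · rw [if_neg hj]
      have h2 := (hpair j i1 hj).2 k hk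
      rw [h1, mul_one] at h2
      exact h2
  -- each column has exactly one unit row
  have hcol : ∀ i, (S.filter fun k => P k i = 1).card = 1 := by
    intro i
    have hg := hgram i i
    rw [if_pos rfl,
      ← Finset.sum_filter_add_sum_filter_not Finset.univ (fun k => ∀ i, 1 ≤ P k i)] at hg
    rw [← hBdef, ← hSdef] at hg
    have hBsum : ∑ k ∈ B, P k i * P k i = d := by
      rw [Finset.sum_congr rfl (fun k hk => show P k i * P k i = 1 by
        rw [hBone k hk i]; ring)]
      simp [hBd]
    have hSsum : ∑ k ∈ S, P k i * P k i = 1 := by linarith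
    rw [Finset.sum_congr rfl (fun k hk => show P k i * P k i
        = if P k i = 1 then (1:ℤ) else 0 by
      rcases hsmall01 k hk i with h | h <;> simp [h]), Finset.sum_boole] at hSsum
    exact_mod_cast hSsum
  -- choose the unit rows
  have hgex : ∀ i : Fin n, ∃ k, S.filter (fun k => P k i = 1) = {k} :=
    fun i => Finset.card_eq_one.mp (hcol i)
  choose g hg using hgex
  have hgS : ∀ i, g i ∈ S ∧ P (g i) i = 1 := by
    intro i
    have : g i ∈ S.filter (fun k => P k i = 1) := by
      rw [hg i]; exact Finset.mem_singleton_self _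
    exact Finset.mem_filter.mp this |>.imp id id
  have hgrow : ∀ i j, P (g i) j = if j = i then 1 else 0 := by
    intro i j
    obtain ⟨i', hi'⟩ := hSrow (g i) (hgS i).1
    have hii : i' = i := by
      by_contra hne
      have h2 := (hgS i).2
      rw [hi' i, if_neg (fun h => hne h.symm)] at h2
      exact absurd h2 (by norm_num)
    rw [hii] at hi'
    exact hi' j
  -- build the permutation
  have hBd' : B.card = d := hBd
  let β := B.orderIsoOfFin hBd'
  let f : Fin (n + d) → Fin (n + d) := fun i =>
    if h : (i : ℕ) < n then g ⟨i, h⟩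
    else (β ⟨(i : ℕ) - n, by omega⟩ : Fin (n + d))
  have hfdef : ∀ i, f i = if h : (i : ℕ) < n then g ⟨i, h⟩
      else (β ⟨(i : ℕ) - n, by omega⟩ : Fin (n + d)) := fun _ => rfl
  have hSB : ∀ k, k ∈ S → k ∉ B := by
    intro k hk hkB
    rw [hSdef, Finset.mem_filter] at hk
    rw [hBdef, Finset.mem_filter] at hkB
    exact hk.2 hkB.2
  have hinj : Function.Injective f := by
    intro a b hab
    rw [hfdef, hfdef] at hab
    by_cases h1 : (a : ℕ) < n <;> by_cases h2 : (b : ℕ) < n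
    · rw [dif_pos h1, dif_pos h2] at hab
      have e1 : P (g ⟨a, h1⟩) ⟨a, h1⟩ = 1 := (hgS _).2
      rw [hab, hgrow] at e1
      have : (⟨a, h1⟩ : Fin n) = ⟨b, h2⟩ := by
        by_contra hne
        rw [if_neg hne] at e1
        exact absurd e1 (by norm_num)
      rw [Fin.ext_iff]
      simpa [Fin.ext_iff] using this
    · rw [dif_pos h1, dif_neg h2] at hab
      have hmemS := (hgS ⟨a, h1⟩).1
      rw [hab] at hmemS
      exact absurd ((β ⟨(b : ℕ) - n, by omega⟩).2) (hSB _ hmemS)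
    · rw [dif_neg h1, dif_pos h2] at hab
      have hmemS := (hgS ⟨b, h2⟩).1
      rw [← hab] at hmemS
      exact absurd ((β ⟨(a : ℕ) - n, by omega⟩).2) (hSB _ hmemS)
    · rw [dif_neg h1, dif_neg h2] at hab
      have : (⟨(a : ℕ) - n, by omega⟩ : Fin d) = ⟨(b : ℕ) - n, by omega⟩ :=
        β.injective (Subtype.ext hab)
      rw [Fin.ext_iff] at this ⊢
      simp only [] at this
      omega
  refine ⟨Equiv.ofBijective f ((Finite.injective_iff_bijective).mp hinj), ?_⟩
  intro i j
  show P (f i) j = _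
  rw [hfdef]
  by_cases h : (i : ℕ) < n
  · rw [dif_pos h, hgrow]
    by_cases hji : j = (⟨i, h⟩ : Fin n)
    · rw [if_pos hji, if_pos (by rw [hji])]
    · rw [if_neg hji, if_neg (fun hc => hji (Fin.ext hc.symm)), if_neg (by omega)]
  · rw [dif_neg h]
    have hmem := (β ⟨(i : ℕ) - n, by omega⟩).2
    rw [hBone _ hmem j, if_neg (by omega), if_pos (by omega)]

/-- Up to permuting rows and changing signs of rows, the only solution of
`Qᵀ·Q = (d + δᵢⱼ)` with nonzero rows is the matrix whose first `n` rows are the standard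
basis vectors and whose last `d` rows all equal `(−1,…,−1)`. -/
theorem stmt_16 (d n : ℕ) (hd : 0 < d) (hn : 0 < n)
    (C : Matrix (Fin n) (Fin n) ℤ)
    (hC : ∀ i j, C i j = d + if i = j then 1 else 0)
    (Q : Matrix (Fin (n + d)) (Fin n) ℤ)
    (hrows : ∀ i, (fun j => Q i j) ≠ 0)
    (hQ : Qᵀ * Q = C) :
    ∃ σ : Equiv.Perm (Fin (n + d)), ∃ ε : Fin (n + d) → ℤ,
      (∀ i, ε i = 1 ∨ ε i = -1) ∧
      ∀ i j, ε i * Q (σ i) j =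
        if (i : ℕ) = (j : ℕ) then 1 else if n ≤ (i : ℕ) then -1 else 0 := by
  classical
  have hgram : ∀ i j, ∑ k, Q k i * Q k j = (d : ℤ) + if i = j then 1 else 0 := by
    intro i j
    have := congrFun (congrFun hQ i) j
    rw [Matrix.mul_apply] at this
    simp only [Matrix.transpose_apply] at this
    rw [this, hC]
  have hrows' : ∀ k, ∃ i, Q k i ≠ 0 := by
    intro k
    by_contra hcon
    push_neg at hcon
    exact hrows k (funext hcon)
  rcases eq_or_lt_of_le (Nat.one_le_iff_ne_zero.mpr hn.ne') with h1 | h2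
  · -- n = 1
    obtain rfl : n = 1 := h1.symm
    have hsq : ∀ k, Q k 0 * Q k 0 = 1 := by
      have hg := hgram 0 0
      rw [if_pos rfl] at hg
      have hterm : ∀ k, (1:ℤ) ≤ Q k 0 * Q k 0 := by
        intro k
        obtain ⟨i, hi⟩ := hrows' k
        have : i = 0 := Subsingleton.elim _ _
        rw [this] at hi
        rcases lt_or_gt_of_ne hi with h | h <;> nlinarith
      intro k
      have hz : ∑ k, (Q k 0 * Q k 0 - 1) = 0 := by
        rw [Finset.sum_sub_distrib, hg]
        simp [Finset.card_univ]
        ring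
      have := (Finset.sum_eq_zero_iff_of_nonneg
        (fun k _ => by have := hterm k; linarith)).mp hz k (Finset.mem_univ k)
      linarith
    refine ⟨1, fun i => (if (i : ℕ) = 0 then 1 else -1) * Q i 0, ?_, ?_⟩
    · intro i
      have hpm : Q i 0 = 1 ∨ Q i 0 = -1 := by
        have h := hsq i
        rcases lt_trichotomy (Q i 0) 0 with h' | h' | h'
        · right; nlinarith
        · exfalso; rw [h'] at h; norm_num at h
        · left; nlinarith
      show (if (i : ℕ) = 0 then (1:ℤ) else -1) * Q i 0 = 1 ∨
        (if (i : ℕ) = 0 then (1:ℤ) else -1) * Q i 0 = -1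
      rcases hpm with h' | h' <;> rw [h'] <;> by_cases hc : (i : ℕ) = 0 <;> simp [hc]
    · intro i j
      have hj : j = 0 := Subsingleton.elim _ _
      rw [hj]
      show (if (i : ℕ) = 0 then (1:ℤ) else -1) * Q i 0 * Q i 0 = _
      rw [mul_assoc, hsq i, mul_one]
      have hjv : ((0 : Fin 1) : ℕ) = 0 := rfl
      rw [hjv]
      by_cases h : (i : ℕ) = 0
      · rw [if_pos h, if_pos h]
      · rw [if_neg h, if_neg h, if_pos (by omega)]
  · -- n ≥ 2
    have hdiffQ := diff_bound d Q hgram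
    set ε' : Fin (n + d) → ℤ := fun k => if ∃ i, 0 < Q k i then 1 else -1 with hε'
    have hε'pm : ∀ k, ε' k = 1 ∨ ε' k = -1 := by
      intro k; by_cases h : ∃ i, 0 < Q k i <;> simp [hε', h]
    have hε'sq : ∀ k, ε' k * ε' k = 1 := by
      intro k; rcases hε'pm k with h | h <;> rw [h] <;> norm_num
    set P : Fin (n + d) → Fin n → ℤ := fun k i => ε' k * Q k i with hP
    have hpos : ∀ k i, 0 ≤ P k i := by
      intro k i
      simp only [hP, hε']
      by_cases h : ∃ i, 0 < Q k i
      · rw [if_pos h, one_mul]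
        obtain ⟨i0, hi0⟩ := h
        have := hdiffQ k i0 i
        omega
      · rw [if_neg h, neg_one_mul]
        push_neg at h
        have := h i
        omega
    have hrowsP : ∀ k, ∃ i, P k i ≠ 0 := by
      intro k
      obtain ⟨i, hi⟩ := hrows' k
      exact ⟨i, by simp only [hP]; rcases hε'pm k with h | h <;> rw [h] <;> simp [hi]⟩
    have hgramP : ∀ i j, ∑ k, P k i * P k j = (d : ℤ) + if i = j then 1 else 0 := by
      intro i j
      rw [← hgram i j]
      refine Finset.sum_congr rfl fun k _ => ?_
      simp only [hP]
      rcases hε'pm k with h | h <;> rw [h] <;> ring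
    obtain ⟨σ, hσ⟩ := key d n h2 P hpos hrowsP hgramP
    refine ⟨σ, fun i => if (i : ℕ) < n then ε' (σ i) else -ε' (σ i), ?_, ?_⟩
    · intro i
      show (if (i : ℕ) < n then ε' (σ i) else -ε' (σ i)) = 1 ∨
        (if (i : ℕ) < n then ε' (σ i) else -ε' (σ i)) = -1
      rcases hε'pm (σ i) with h | h <;> by_cases hc : (i : ℕ) < n <;> simp [hc, h]
    · intro i j
      show (if (i : ℕ) < n then ε' (σ i) else -ε' (σ i)) * Q (σ i) j = _
      have hσij := hσ i j
      have hQP : Q (σ i) j = ε' (σ i) * P (σ i) j := by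
        simp only [hP]
        rcases hε'pm (σ i) with h | h <;> rw [h] <;> ring
      by_cases h : (i : ℕ) < n
      · rw [if_pos h, hQP, ← mul_assoc, hε'sq, one_mul, hσij]
        by_cases hc : (i : ℕ) = (j : ℕ)
        · rw [if_pos hc, if_pos hc]
        · rw [if_neg hc, if_neg hc, if_neg (show ¬ n ≤ (i : ℕ) by omega),
            if_neg (show ¬ n ≤ (i : ℕ) by omega)]
      · rw [if_neg h, hQP, neg_mul, ← mul_assoc, hε'sq, one_mul, hσij]
        have hji : ¬ (i : ℕ) = (j : ℕ) := by have := j.isLt; omega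
        rw [if_neg hji, if_neg hji, if_pos (by omega), if_pos (by omega)]
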